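/- Let G be a finite DAG with the ReLU node semantics a_u = ReLU(∑_{v→u} k_{v,u} a_v) for non-leaf nodes, and let A(u) = {v : in-degree(v)=0, there exists a path from v to u passing only through nodes w with a_w > 0}. If a_t > 0 for the root t and all nodes on paths from activated leaves to t are activated, then a_t = ∑_{v ∈ A(t)} a_v · g_v, where g_v is the path-sum over activated paths of edge-weight products; moreover, leaves v with a_v = 0 contribute zero to this sum. -/

import Mathlib

open Finset

noncomputable section
open scoped Classical

/-- Product of edge weights along a list of vertices. -/
def pathProd {n : ℕ} (k : Fin n → Fin n → ℝ) : List (Fin n) → ℝ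
  | [] => 1
  | [_] => 1
  | i :: j :: rest => k i j * pathProd k (j :: rest)

/-- Vertex sets of potential (increasing) paths from `v` to `t`. -/
def pathFinsets {n : ℕ} (v t : Fin n) : Finset (Finset (Fin n)) :=
  Finset.univ.powerset.filter (fun S => v ∈ S ∧ t ∈ S ∧ ∀ w ∈ S, v ≤ w ∧ w ≤ t)

/-- Sum over all directed paths from `v` to `t` of the product of edge weights. -/
def pathSum {n : ℕ} (k : Fin n → Fin n → ℝ) (v t : Fin n) : ℝ :=
  ∑ S ∈ pathFinsets v t, pathProd k (S.sort (· ≤ ·))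

/-- There exists a genuine directed path (all edges present) from `v` to `t`. -/
def hasPath {n : ℕ} (k : Fin n → Fin n → ℝ) (v t : Fin n) : Prop :=
  ∃ S ∈ pathFinsets v t, (S.sort (· ≤ ·)).Chain' (fun i j => k i j ≠ 0)

/-- Path sum restricted to paths all of whose intermediate nodes are activated. -/
def actPathSum {n : ℕ} (k : Fin n → Fin n → ℝ) (a : Fin n → ℝ) (v t : Fin n) : ℝ :=
  ∑ S ∈ (pathFinsets v t).filter (fun S => ∀ w ∈ S, w ≠ v → w ≠ t → 0 < a w),
    pathProd k (S.sort (· ≤ ·))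

/-- Existence of an activated path (edges present, intermediate nodes activated). -/
def hasActPath {n : ℕ} (k : Fin n → Fin n → ℝ) (a : Fin n → ℝ) (v t : Fin n) : Prop :=
  ∃ S ∈ pathFinsets v t, (S.sort (· ≤ ·)).Chain' (fun i j => k i j ≠ 0) ∧
    ∀ w ∈ S, w ≠ v → w ≠ t → 0 < a w

lemma mem_pathFinsets {n : ℕ} {v t : Fin n} {S : Finset (Fin n)} :
    S ∈ pathFinsets v t ↔ v ∈ S ∧ t ∈ S ∧ ∀ w ∈ S, v ≤ w ∧ w ≤ t := by
  simp [pathFinsets]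

lemma pathProd_chain' {n : ℕ} (k : Fin n → Fin n → ℝ) :
    ∀ l : List (Fin n), pathProd k l ≠ 0 → l.Chain' (fun i j => k i j ≠ 0)
  | [], _ => List.isChain_nil
  | [i], _ => List.isChain_singleton i
  | i :: j :: rest, h => by
      rw [pathProd] at h
      exact List.isChain_cons_cons.mpr ⟨fun h0 => h (by rw [h0, zero_mul]),
        pathProd_chain' k (j :: rest) (fun h0 => h (by rw [h0, mul_zero]))⟩

lemma pathProd_append {n : ℕ} (k : Fin n → Fin n → ℝ) :
    ∀ (l : List (Fin n)) (v u : Fin n), l.getLast? = some v →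
      pathProd k (l ++ [u]) = pathProd k l * k v u
  | [], v, u, h => by simp at h
  | [x], v, u, h => by
      simp only [List.getLast?_singleton, Option.some.injEq] at h
      subst h
      simp [pathProd]
  | x :: y :: rest, v, u, h => by
      rw [List.getLast?_cons_cons] at h
      show k x y * pathProd k ((y :: rest) ++ [u]) = k x y * pathProd k (y :: rest) * k v u
      rw [pathProd_append k (y :: rest) v u h, mul_assoc]

lemma sort_insert_max {n : ℕ} {a : Fin n} {s : Finset (Fin n)} (h₁ : ∀ b ∈ s, b ≤ a)
    (h₂ : a ∉ s) : (insert a s).sort (· ≤ ·) = s.sort (· ≤ ·) ++ [a] := by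
  refine (fun hp hs => List.Perm.eq_of_pairwise' (Finset.pairwise_sort ..) hs hp) ?_ ?_
  · exact ((Finset.sort_perm_toList _ _).trans
      ((Finset.toList_insert h₂).trans
        (List.Perm.cons a (Finset.sort_perm_toList _ _).symm))).trans
      (List.perm_append_singleton _ _).symm
  · rw [List.pairwise_append]
    refine ⟨Finset.pairwise_sort .., List.pairwise_singleton _ _, ?_⟩
    intro x hx y hy
    rw [List.mem_singleton] at hy
    subst hy
    exact h₁ x (Finset.mem_sort _ |>.mp hx)

lemma pathFinsets_self {n : ℕ} (u : Fin n) : pathFinsets u u = {{u}} := by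
  ext S
  simp only [mem_pathFinsets, Finset.mem_singleton]
  constructor
  · rintro ⟨hu, -, hb⟩
    apply Finset.eq_singleton_iff_unique_mem.mpr ⟨hu, fun x hx => le_antisymm (hb x hx).2 (hb x hx).1⟩
  · rintro rfl
    simp

lemma actPathSum_self {n : ℕ} (k : Fin n → Fin n → ℝ) (a : Fin n → ℝ) (u : Fin n) :
    actPathSum k a u u = 1 := by
  rw [actPathSum, pathFinsets_self]
  rw [Finset.filter_singleton]
  simp [pathProd]


lemma sort_getLast_max {n : ℕ} {E : Finset (Fin n)} (hE : E.Nonempty) :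
    (E.sort (· ≤ ·)).getLast? = some (E.max' hE) := by
  have h1 : E = insert (E.max' hE) (E.erase (E.max' hE)) :=
    (Finset.insert_erase (E.max'_mem hE)).symm
  have h2 : E.sort (· ≤ ·) = (E.erase (E.max' hE)).sort (· ≤ ·) ++ [E.max' hE] := by
    conv_lhs => rw [h1]
    exact sort_insert_max (fun b hb => E.le_max' b (Finset.mem_of_mem_erase hb))
      (Finset.notMem_erase _ _)
  rw [h2, List.getLast?_concat]

lemma sigma_mk_eq' {α : Type*} {β : Type*} {a b : α} {c d : β} (h1 : a = b) (h2 : c = d) :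
    (⟨a, c⟩ : Σ _ : α, β) = ⟨b, d⟩ := by subst h1; subst h2; rfl

lemma actPathSum_decomp {n : ℕ} (k : Fin n → Fin n → ℝ) (a : Fin n → ℝ)
    {w u : Fin n} (hwu : w ≠ u) :
    actPathSum k a w u =
      ∑ v ∈ Finset.univ.filter (fun v => v < u ∧ (0 < a v ∨ v = w)),
        actPathSum k a w v * k v u := by
  have hrhs :
      (∑ v ∈ Finset.univ.filter (fun v => v < u ∧ (0 < a v ∨ v = w)),
        actPathSum k a w v * k v u)
      = ∑ x ∈ (Finset.univ.filter (fun v => v < u ∧ (0 < a v ∨ v = w))).sigma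
          (fun v => (pathFinsets w v).filter (fun S => ∀ y ∈ S, y ≠ w → y ≠ v → 0 < a y)),
          pathProd k (x.2.sort (· ≤ ·)) * k x.1 u := by
    rw [Finset.sum_sigma]
    exact Finset.sum_congr rfl fun v _ => by rw [actPathSum, Finset.sum_mul]
  rw [hrhs, actPathSum]
  refine Finset.sum_bij'
    (fun S hS => ⟨(S.erase u).max'
      ⟨w, Finset.mem_erase.mpr ⟨hwu, (mem_pathFinsets.mp (Finset.mem_filter.mp hS).1).1⟩⟩,
      S.erase u⟩)
    (fun p _ => insert u p.2) ?_ ?_ ?_ ?_ ?_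
  · -- hi
    intro S hS
    obtain ⟨hSp, hact⟩ := Finset.mem_filter.mp hS
    obtain ⟨hw, hu, hb⟩ := mem_pathFinsets.mp hSp
    set hne : (S.erase u).Nonempty :=
      ⟨w, Finset.mem_erase.mpr ⟨hwu, hw⟩⟩ with hnedef
    set M := (S.erase u).max' hne with hMdef
    have hME : M ∈ S.erase u := Finset.max'_mem _ _
    have hMu : M ≠ u := (Finset.mem_erase.mp hME).1
    have hMS : M ∈ S := Finset.mem_of_mem_erase hME
    have hMlt : M < u := lt_of_le_of_ne (hb M hMS).2 hMu
    rw [Finset.mem_sigma]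
    constructor
    · rw [Finset.mem_filter]
      refine ⟨Finset.mem_univ _, hMlt, ?_⟩
      by_cases hMw : M = w
      · exact Or.inr hMw
      · exact Or.inl (hact M hMS hMw hMu)
    · rw [Finset.mem_filter, mem_pathFinsets]
      refine ⟨⟨Finset.mem_erase.mpr ⟨hwu, hw⟩, hME, fun x hx =>
        ⟨(hb x (Finset.mem_of_mem_erase hx)).1, Finset.le_max' _ x hx⟩⟩, ?_⟩
      intro x hx hxw hxM
      exact hact x (Finset.mem_of_mem_erase hx) hxw (Finset.mem_erase.mp hx).1
  · -- hj
    rintro ⟨v, S'⟩ hp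
    rw [Finset.mem_sigma] at hp
    obtain ⟨hv, hS'⟩ := hp
    obtain ⟨-, hvu, hcond⟩ := Finset.mem_filter.mp hv
    obtain ⟨hS'p, hact'⟩ := Finset.mem_filter.mp hS'
    obtain ⟨hw', hv', hb'⟩ := mem_pathFinsets.mp hS'p
    rw [Finset.mem_filter, mem_pathFinsets]
    refine ⟨⟨Finset.mem_insert_of_mem hw', Finset.mem_insert_self _ _, ?_⟩, ?_⟩
    · intro x hx
      rcases Finset.mem_insert.mp hx with rfl | hx
      · exact ⟨le_of_lt (lt_of_le_of_lt (hb' v hv').1 hvu), le_refl _⟩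
      · exact ⟨(hb' x hx).1, le_of_lt (lt_of_le_of_lt (hb' x hx).2 hvu)⟩
    · intro x hx hxw hxu
      rcases Finset.mem_insert.mp hx with rfl | hx
      · exact absurd rfl hxu
      · by_cases hxv : x = v
        · subst hxv
          rcases hcond with h | h
          · exact h
          · exact absurd h hxw
        · exact hact' x hx hxw hxv
  · -- left_inv
    intro S hS
    exact Finset.insert_erase (mem_pathFinsets.mp (Finset.mem_filter.mp hS).1).2.1
  · -- right_inv
    rintro ⟨v, S'⟩ hp
    rw [Finset.mem_sigma] at hp
    obtain ⟨hv, hS'⟩ := hp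
    obtain ⟨-, hvu, hcond⟩ := Finset.mem_filter.mp hv
    obtain ⟨hS'p, hact'⟩ := Finset.mem_filter.mp hS'
    obtain ⟨hw', hv', hb'⟩ := mem_pathFinsets.mp hS'p
    have hunotin : u ∉ S' := fun h => absurd (lt_of_le_of_lt (hb' u h).2 hvu) (lt_irrefl u)
    have hE : (insert u S').erase u = S' := Finset.erase_insert hunotin
    refine sigma_mk_eq' ?_ hE
    apply le_antisymm
    · apply Finset.max'_le
      intro x hx
      rw [hE] at hx
      exact (hb' x hx).2
    · apply Finset.le_max'
      rw [hE]
      exact hv'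
  · -- value
    intro S hS
    obtain ⟨hSp, hact⟩ := Finset.mem_filter.mp hS
    obtain ⟨hw, hu, hb⟩ := mem_pathFinsets.mp hSp
    have hsort : S.sort (· ≤ ·) = (S.erase u).sort (· ≤ ·) ++ [u] := by
      conv_lhs => rw [(Finset.insert_erase hu).symm]
      exact sort_insert_max (fun b hb' => (hb b (Finset.mem_of_mem_erase hb')).2)
        (Finset.notMem_erase _ _)
    rw [hsort]
    exact pathProd_append k _ _ u (sort_getLast_max ⟨w, Finset.mem_erase.mpr ⟨hwu, hw⟩⟩)

lemma actPathSum_eq_zero {n : ℕ} {k : Fin n → Fin n → ℝ} {a : Fin n → ℝ} {v t : Fin n}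
    (h : ¬ hasActPath k a v t) : actPathSum k a v t = 0 := by
  apply Finset.sum_eq_zero
  intro S hS
  obtain ⟨hSp, hact⟩ := Finset.mem_filter.mp hS
  by_contra hp
  exact h ⟨S, hSp, pathProd_chain' k _ hp, hact⟩

lemma hasPath_step {n : ℕ} {k : Fin n → Fin n → ℝ} {v u t : Fin n}
    (htopo : ∀ i j, k i j ≠ 0 → i < j) (hvu : k v u ≠ 0) (h : hasPath k u t) :
    hasPath k v t := by
  obtain ⟨S, hSp, hchain⟩ := h
  obtain ⟨hu, ht, hb⟩ := mem_pathFinsets.mp hSp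
  have hvltu : v < u := htopo v u hvu
  have hvnotin : v ∉ S := fun h => absurd (hb v h).1 (not_le.mpr hvltu)
  have huS : u ∉ S.erase u := Finset.notMem_erase _ _
  have hsortS : S.sort (· ≤ ·) = u :: (S.erase u).sort (· ≤ ·) := by
    conv_lhs => rw [(Finset.insert_erase hu).symm]
    exact Finset.sort_insert _ (fun b hb' => (hb b (Finset.mem_of_mem_erase hb')).1) huS
  have hsortIns : (insert v S).sort (· ≤ ·) = v :: S.sort (· ≤ ·) :=
    Finset.sort_insert _ (fun b hb' => le_of_lt (lt_of_lt_of_le hvltu (hb b hb').1)) hvnotin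
  refine ⟨insert v S, ?_, ?_⟩
  · rw [mem_pathFinsets]
    refine ⟨Finset.mem_insert_self _ _, Finset.mem_insert_of_mem ht, ?_⟩
    intro x hx
    rcases Finset.mem_insert.mp hx with rfl | hx
    · exact ⟨le_refl _, le_of_lt (lt_of_lt_of_le hvltu (hb u hu).2)⟩
    · exact ⟨le_of_lt (lt_of_lt_of_le hvltu (hb x hx).1), (hb x hx).2⟩
  · rw [hsortIns, hsortS]
    rw [hsortS] at hchain
    exact List.isChain_cons_cons.mpr ⟨hvu, hchain⟩


lemma attr_main {n : ℕ} (k : Fin n → Fin n → ℝ) (a : Fin n → ℝ) (t : Fin n)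
    (htopo : ∀ i j, k i j ≠ 0 → i < j)
    (hrec : ∀ u, (∃ v, k v u ≠ 0) → a u = max (∑ v, k v u * a v) 0) :
    ∀ u : Fin n, 0 < a u → hasPath k u t →
      a u = ∑ v ∈ Finset.univ.filter (fun v => ∀ x, k x v = 0),
        a v * actPathSum k a v u := by
  suffices H : ∀ m : ℕ, ∀ u : Fin n, u.val < m → 0 < a u → hasPath k u t →
      a u = ∑ v ∈ Finset.univ.filter (fun v => ∀ x, k x v = 0),
        a v * actPathSum k a v u by
    exact fun u => H (u.val + 1) u (Nat.lt_succ_self _)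
  intro m
  induction m with
  | zero => exact fun u hu => absurd hu (Nat.not_lt_zero _)
  | succ m ih =>
    intro u hum hau hupath
    by_cases hleaf : ∀ x, k x u = 0
    · rw [Finset.sum_eq_single u
        (fun v _ hvu => by
          rw [actPathSum_decomp k a hvu,
            Finset.sum_eq_zero (fun y _ => by rw [hleaf y, mul_zero]), mul_zero])
        (fun h => absurd (Finset.mem_filter.mpr ⟨Finset.mem_univ _, hleaf⟩) h),
        actPathSum_self, mul_one]
    · push_neg at hleaf
      have hsum : a u = ∑ v, k v u * a v := by
        have h := hrec u hleaf
        rcases le_or_gt (∑ v, k v u * a v) 0 with hle | hlt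
        · rw [h, max_eq_right hle] at hau; exact absurd hau (lt_irrefl 0)
        · rw [h, max_eq_left (le_of_lt hlt)]
      have key : ∀ w ∈ Finset.univ.filter (fun v => ∀ x, k x v = 0),
          a w * actPathSum k a w u =
          ∑ v ∈ Finset.univ, (if v < u ∧ (0 < a v ∨ v = w) then
            a w * (actPathSum k a w v * k v u) else 0) := by
        intro w hw
        have hwleaf := (Finset.mem_filter.mp hw).2
        have hwu : w ≠ u := by
          rintro rfl
          obtain ⟨x, hx⟩ := hleaf
          exact hx (hwleaf x)
        rw [actPathSum_decomp k a hwu, Finset.mul_sum, Finset.sum_filter]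
      rw [Finset.sum_congr rfl key, Finset.sum_comm, hsum]
      apply Finset.sum_congr rfl
      intro v _
      by_cases hkv : k v u = 0
      · rw [hkv, zero_mul]
        refine (Finset.sum_eq_zero ?_).symm
        intro w _
        split
        · rw [mul_zero, mul_zero]
        · rfl
      · have hvu : v < u := htopo v u hkv
        by_cases hav : 0 < a v
        · have hcong : ∀ w ∈ Finset.univ.filter (fun v => ∀ x, k x v = 0),
              (if v < u ∧ (0 < a v ∨ v = w) then a w * (actPathSum k a w v * k v u) else 0)
              = a w * actPathSum k a w v * k v u := by
            intro w _
            rw [if_pos ⟨hvu, Or.inl hav⟩, mul_assoc]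
          rw [Finset.sum_congr rfl hcong, ← Finset.sum_mul]
          have hFv : ∑ w ∈ Finset.univ.filter (fun v => ∀ x, k x v = 0),
              a w * actPathSum k a w v = a v := by
            by_cases hvleaf : ∀ x, k x v = 0
            · rw [Finset.sum_eq_single v
                (fun x _ hxv => by
                  rw [actPathSum_decomp k a hxv,
                    Finset.sum_eq_zero (fun y _ => by rw [hvleaf y, mul_zero]), mul_zero])
                (fun h => absurd (Finset.mem_filter.mpr ⟨Finset.mem_univ _, hvleaf⟩) h),
                actPathSum_self, mul_one]
            · push_neg at hvleaf
              exact (ih v (by omega) hav (hasPath_step htopo hkv hupath)).symm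
          rw [hFv, mul_comm]
        · have hcong : ∀ w ∈ Finset.univ.filter (fun v => ∀ x, k x v = 0),
              (if v < u ∧ (0 < a v ∨ v = w) then a w * (actPathSum k a w v * k v u) else 0)
              = (if v = w then a w * (actPathSum k a w v * k v u) else 0) := by
            intro w _
            by_cases hvw : v = w
            · rw [if_pos ⟨hvu, Or.inr hvw⟩, if_pos hvw]
            · rw [if_neg, if_neg hvw]
              rintro ⟨-, h | h⟩
              exacts [hav h, hvw h]
          rw [Finset.sum_congr rfl hcong, Finset.sum_ite_eq]
          by_cases hvleaf : (∀ x, k x v = 0)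
          · rw [if_pos (Finset.mem_filter.mpr ⟨Finset.mem_univ _, hvleaf⟩),
              actPathSum_self]
            ring
          · rw [if_neg (fun h => hvleaf (Finset.mem_filter.mp h).2)]
            push_neg at hvleaf
            have h0 : a v = 0 := le_antisymm (not_lt.mp hav)
              (by rw [hrec v hvleaf]; exact le_max_right _ _)
            rw [h0, mul_zero]

/-- ReLU computation graph; with A(t) the set of leaves having an
activated path to the root t, if a_t > 0 and every node lying on a path from an
activated leaf to t is activated, then a_t equals the sum over A(t) of leaf
activation times the activated-path-sum gradient; moreover leaves with zero
activation contribute zero. -/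
theorem relu_graph_activated_leaf_attribution {n : ℕ} (k : Fin n → Fin n → ℝ)
    (a : Fin n → ℝ) (t : Fin n)
    (htopo : ∀ i j, k i j ≠ 0 → i < j)
    (hrec : ∀ u, (∃ v, k v u ≠ 0) → a u = max (∑ v, k v u * a v) 0)
    (hat : 0 < a t)
    (hact : ∀ v w, (∀ u, k u v = 0) → 0 < a v → hasPath k v w → hasPath k w t →
      0 < a w) :
    a t = ∑ v ∈ Finset.univ.filter
        (fun v => (∀ u, k u v = 0) ∧ hasActPath k a v t),
      a v * actPathSum k a v t ∧
    ∀ v ∈ Finset.univ.filter (fun v => (∀ u, k u v = 0) ∧ hasActPath k a v t),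
      a v = 0 → a v * actPathSum k a v t = 0 := by
  constructor
  · have h1 : a t = ∑ v ∈ Finset.univ.filter (fun v => ∀ x, k x v = 0),
        a v * actPathSum k a v t := by
      apply attr_main k a t htopo hrec t hat
      refine ⟨{t}, ?_, ?_⟩
      · rw [mem_pathFinsets]
        simp
      · rw [Finset.sort_singleton]
        exact List.isChain_singleton _
    rw [h1]
    symm
    apply Finset.sum_subset
    · intro v hv
      rw [Finset.mem_filter] at hv ⊢
      exact ⟨hv.1, hv.2.1⟩
    · intro v hv hnot
      rw [Finset.mem_filter] at hv hnot
      have hna : ¬ hasActPath k a v t := fun h => hnot ⟨hv.1, hv.2, h⟩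
      rw [actPathSum_eq_zero hna, mul_zero]
  · intro v _ hv
    rw [hv, zero_mul]
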